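/- Let J be a symmetric positive definite m×m matrix and H an m×k real matrix. Then J⁻¹ − H(HᵀJH)†Hᵀ is positive semidefinite, where † denotes the Moore–Penrose pseudoinverse. -/

import Mathlib

open Matrix

/-- `G` satisfies the four Penrose conditions for `A`, i.e. `G` is the
Moore–Penrose pseudoinverse of `A` (which is uniquely characterized by them). -/
def IsMoorePenroseInv {k : ℕ} (A G : Matrix (Fin k) (Fin k) ℝ) : Prop :=
  A * G * A = A ∧ G * A * G = G ∧ (A * G)ᵀ = A * G ∧ (G * A)ᵀ = G * A

lemma mp_unique {k : ℕ} {A X Y : Matrix (Fin k) (Fin k) ℝ}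
    (hX : IsMoorePenroseInv A X) (hY : IsMoorePenroseInv A Y) : X = Y := by
  obtain ⟨hX1, hX2, hX3, hX4⟩ := hX
  obtain ⟨hY1, hY2, hY3, hY4⟩ := hY
  have h1 : X = X * Xᵀ * Aᵀ := by
    calc X = X * A * X := hX2.symm
    _ = X * (A * X) := by rw [mul_assoc]
    _ = X * (A * X)ᵀ := by rw [hX3]
    _ = X * (Xᵀ * Aᵀ) := by rw [transpose_mul]
    _ = X * Xᵀ * Aᵀ := by rw [mul_assoc]
  have h2 : Aᵀ = Aᵀ * (A * Y) := by
    calc Aᵀ = (A * Y * A)ᵀ := by rw [hY1]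
    _ = Aᵀ * (A * Y)ᵀ := by rw [transpose_mul]
    _ = Aᵀ * (A * Y) := by rw [hY3]
  have h3 : Y = Aᵀ * Yᵀ * Y := by
    calc Y = Y * A * Y := hY2.symm
    _ = (Y * A)ᵀ * Y := by rw [hY4]
    _ = Aᵀ * Yᵀ * Y := by rw [transpose_mul]
  have h4 : Aᵀ = X * A * Aᵀ := by
    calc Aᵀ = (A * X * A)ᵀ := by rw [hX1]
    _ = (A * (X * A))ᵀ := by rw [mul_assoc]
    _ = (X * A)ᵀ * Aᵀ := by rw [transpose_mul]
    _ = X * A * Aᵀ := by rw [hX4]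
  have hXY : X = X * A * Y := by
    calc X = X * Xᵀ * Aᵀ := h1
    _ = X * Xᵀ * (Aᵀ * (A * Y)) := by rw [← h2]
    _ = X * Xᵀ * Aᵀ * (A * Y) := by simp only [mul_assoc]
    _ = X * (A * Y) := by rw [← h1]
    _ = X * A * Y := by rw [mul_assoc]
  have hYX : Y = X * A * Y := by
    calc Y = Aᵀ * Yᵀ * Y := h3
    _ = X * A * Aᵀ * Yᵀ * Y := by rw [← h4]
    _ = X * A * (Aᵀ * Yᵀ * Y) := by simp only [mul_assoc]
    _ = X * A * Y := by rw [← h3]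
  rw [hXY, ← hYX]

lemma mp_symm {k : ℕ} {A G : Matrix (Fin k) (Fin k) ℝ} (hA : Aᵀ = A)
    (hG : IsMoorePenroseInv A G) : Gᵀ = G := by
  obtain ⟨h1, h2, h3, h4⟩ := hG
  refine mp_unique ?_ ⟨h1, h2, h3, h4⟩
  refine ⟨?_, ?_, ?_, ?_⟩
  · have := congrArg transpose h1
    simpa [transpose_mul, hA, mul_assoc] using this
  · have := congrArg transpose h2
    simpa [transpose_mul, hA, mul_assoc] using this
  · calc (A * Gᵀ)ᵀ = G * Aᵀ := by rw [transpose_mul, transpose_transpose]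
    _ = G * A := by rw [hA]
    _ = (G * A)ᵀ := h4.symm
    _ = Aᵀ * Gᵀ := by rw [transpose_mul]
    _ = A * Gᵀ := by rw [hA]
  · calc (Gᵀ * A)ᵀ = Aᵀ * G := by rw [transpose_mul, transpose_transpose]
    _ = A * G := by rw [hA]
    _ = (A * G)ᵀ := h3.symm
    _ = Gᵀ * Aᵀ := by rw [transpose_mul]
    _ = Gᵀ * A := by rw [hA]

theorem stmt7 (m k : ℕ) (J : Matrix (Fin m) (Fin m) ℝ) (H : Matrix (Fin m) (Fin k) ℝ)
    (hJ : J.PosDef) (G : Matrix (Fin k) (Fin k) ℝ)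
    (hG : IsMoorePenroseInv (Hᵀ * J * H) G) :
    (J⁻¹ - H * G * Hᵀ).PosSemidef := by
  have hJsym : Jᵀ = J := by
    simpa [conjTranspose_eq_transpose_of_trivial] using hJ.isHermitian.eq
  have hAsym : (Hᵀ * J * H)ᵀ = Hᵀ * J * H := by
    rw [transpose_mul, transpose_mul, transpose_transpose, hJsym, ← Matrix.mul_assoc]
  have hGsym : Gᵀ = G := mp_symm hAsym hG
  open scoped MatrixOrder in
  have hSps : (CFC.sqrt J).PosSemidef := (CFC.sqrt_nonneg J).posSemidef
  open scoped MatrixOrder in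
  obtain ⟨S, hSps, hSsym, hSS⟩ :
      ∃ S : Matrix (Fin m) (Fin m) ℝ, S.PosSemidef ∧ Sᵀ = S ∧ S * S = J := by
    refine ⟨CFC.sqrt J, hSps, ?_, CFC.sqrt_mul_sqrt_self J hJ.posSemidef.nonneg⟩
    simpa [conjTranspose_eq_transpose_of_trivial] using hSps.isHermitian.eq
  have hdet : IsUnit S.det := by
    have h : S.det * S.det = J.det := by rw [← det_mul, hSS]
    have hj : J.det ≠ 0 := hJ.det_pos.ne'
    have hne : S.det ≠ 0 := by
      intro h0; rw [h0, mul_zero] at h; exact hj h.symm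
    exact hne.isUnit
  have hS1 : S * S⁻¹ = 1 := mul_nonsing_inv S hdet
  have hS2 : S⁻¹ * S = 1 := nonsing_inv_mul S hdet
  have hJinv : J⁻¹ = S⁻¹ * S⁻¹ := by rw [← hSS, Matrix.mul_inv_rev]
  have hinvsym : (S⁻¹)ᵀ = S⁻¹ := by rw [transpose_nonsing_inv, hSsym]
  have e1 : ∀ X : Matrix (Fin m) (Fin m) ℝ, S * (S * X) = J * X := fun X => by
    rw [← Matrix.mul_assoc, hSS]
  have e2 : ∀ X : Matrix (Fin k) (Fin m) ℝ,
      G * (Hᵀ * (J * (H * (G * X)))) = G * X := fun X => by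
    calc G * (Hᵀ * (J * (H * (G * X)))) = G * (Hᵀ * J * H) * G * X := by
          simp only [Matrix.mul_assoc]
    _ = G * X := by rw [hG.2.1]
  have Psym : (S * H * G * Hᵀ * S)ᵀ = S * H * G * Hᵀ * S := by
    simp [transpose_mul, hSsym, hGsym, Matrix.mul_assoc]
  have Pidem : (S * H * G * Hᵀ * S) * (S * H * G * Hᵀ * S) = S * H * G * Hᵀ * S := by
    simp only [Matrix.mul_assoc]
    rw [e1, e2]
  have hP : S⁻¹ * (1 - S * H * G * Hᵀ * S) * S⁻¹ = J⁻¹ - H * G * Hᵀ := by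
    rw [Matrix.mul_sub, Matrix.sub_mul, mul_one, hJinv]
    congr 1
    calc S⁻¹ * (S * H * G * Hᵀ * S) * S⁻¹
        = S⁻¹ * S * (H * G * Hᵀ) * (S * S⁻¹) := by simp only [Matrix.mul_assoc]
    _ = H * G * Hᵀ := by rw [hS2, hS1, one_mul, mul_one]
  generalize hPe : S * H * G * Hᵀ * S = P at Psym Pidem hP
  have hfact : (1 - P)ᵀ * (1 - P) = 1 - P := by
    rw [transpose_sub, transpose_one, Psym]
    simp only [sub_mul, mul_sub, one_mul, mul_one, Pidem]
    abel
  have hpsd1 : (1 - P).PosSemidef := by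
    have := posSemidef_conjTranspose_mul_self (1 - P)
    rwa [conjTranspose_eq_transpose_of_trivial, hfact] at this
  have := hpsd1.conjTranspose_mul_mul_same S⁻¹
  rwa [conjTranspose_eq_transpose_of_trivial, hinvsym, hP] at this
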